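/- Let p be a prime, let B and C be commutative rings in which p is a non-zero-divisor, let δ be a p-derivation on B with associated Frobenius lift ψ (ψ(x) = x^p + p·δ(x)), let Δ be a p-derivation on C with associated Frobenius lift f (f(y) = y^p + p·Δ(y)), and let ι : B → C be a ring homomorphism such that f(ι(ψ^{m+1}(a))) = ι(ψ^{m+2}(a)) for all a ∈ B, where m ≥ 0 is a fixed integer. Let b ∈ B satisfy ι(δ^j(b)) = 0 for all 0 ≤ j ≤ m. Then for every n ≥ 1 there exists a centered polynomial H ∈ ℤ[T_1, …, T_n] such that Δ^n(ι(δ^{m+1}(b))) − ι(δ^{m+n+1}(b)) = H(ι(δ^{m+1}(b)), ι(δ^{m+2}(b)), …, ι(δ^{m+n}(b))). -/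

import Mathlib

open MvPolynomial

/-- A `p`-derivation on a commutative ring `B`, relative to the polynomial
`Cp ∈ ℤ[X,Y]` satisfying `p·Cp = X^p + Y^p - (X+Y)^p`. -/
def IsPDeriv (p : ℕ) {B : Type*} [CommRing B] (Cp : MvPolynomial (Fin 2) ℤ)
    (δ : B → B) : Prop :=
  δ 1 = 0 ∧
  (∀ x y : B, δ (x + y) = δ x + δ y + MvPolynomial.aeval ![x, y] Cp) ∧
  (∀ x y : B, δ (x * y) = x ^ p * δ y + y ^ p * δ x + (p : B) * δ x * δ y)

/-- A polynomial is centered if it vanishes when all variables are set to `0`. -/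
def Centered {R : Type*} [CommRing R] {σ : Type*} (F : MvPolynomial σ R) : Prop :=
  MvPolynomial.eval (fun _ => (0 : R)) F = 0

namespace PDA

variable (p : ℕ)

noncomputable section

/-- Ghost-like polynomials, as functions on sequences of ring elements. -/
def Gg {A : Type*} [CommRing A] : ℕ → (ℕ → A) → A
  | 0, x => x 0
  | n+1, x => Gg n x ^ p + (p : A) * Gg n (fun i => x (i+1))

variable {A : Type*} [CommRing A]

lemma Gg_succ (n : ℕ) (x : ℕ → A) :
    Gg p (n+1) x = Gg p n x ^ p + (p:A) * Gg p n (fun i => x (i+1)) := rfl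

lemma Gg_congr : ∀ {n : ℕ} {x y : ℕ → A}, (∀ i ≤ n, x i = y i) → Gg p n x = Gg p n y := by
  intro n
  induction n with
  | zero => intro x y h; simpa [Gg] using h 0 le_rfl
  | succ n ih =>
    intro x y h
    simp only [Gg]
    rw [ih (fun i hi => h i (hi.trans n.le_succ)), ih (fun i hi => h (i+1) (by omega))]

lemma Gg_hom {B : Type*} [CommRing B] {F : Type*} [FunLike F A B] [RingHomClass F A B] (φ : F) :
    ∀ (n : ℕ) (x : ℕ → A), φ (Gg p n x) = Gg p n (fun i => φ (x i)) := by
  intro n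
  induction n with
  | zero => intro x; rfl
  | succ n ih => intro x; simp only [Gg, map_add, map_mul, map_pow, map_natCast, ih]

lemma Gg_zero (hp0 : p ≠ 0) (n : ℕ) : Gg p n (fun _ => (0:A)) = 0 := by
  induction n with
  | zero => rfl
  | succ n ih => simp [Gg, ih, zero_pow hp0]

lemma Gg_zeros (hp0 : p ≠ 0) {n : ℕ} {x : ℕ → A} (h : ∀ i < n, x i = 0) :
    Gg p n x = (p:A)^n * x n := by
  induction n generalizing x with
  | zero => simp [Gg]
  | succ n ih =>
    have h1 : Gg p n x = 0 := by
      rw [Gg_congr p (y := fun _ => (0:A)) (fun i hi => h i (by omega)), Gg_zero p hp0]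
    simp only [Gg, h1]
    rw [ih (fun i hi => h (i+1) (by omega))]
    rw [zero_pow hp0]
    ring

lemma Gg_split (n : ℕ) (x : ℕ → A) :
    Gg p n x = (p:A)^n * x n + Gg p n (fun i => if i = n then 0 else x i) := by
  induction n generalizing x with
  | zero => simp [Gg]
  | succ n ih =>
    simp only [Gg]
    have e1 : Gg p n x = Gg p n (fun i => if i = n + 1 then 0 else x i) :=
      Gg_congr p (fun i hi => by simp [show i ≠ n+1 by omega])
    have e2 : Gg p n (fun i => x (i+1)) =
        (p:A)^n * x (n+1) + Gg p n (fun i => if i = n then 0 else x (i+1)) := ih _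
    have e3 : Gg p n (fun i => if i = n then 0 else x (i+1)) =
        Gg p n (fun i => if i + 1 = n + 1 then 0 else x (i+1)) :=
      Gg_congr p (fun i hi => by simp)
    rw [← e1, e2, e3]
    ring

lemma Gg_shift : ∀ (n : ℕ) (x : ℕ → A),
    Gg p (n+1) x = Gg p n (fun i => x i ^ p + (p:A) * x (i+1)) := by
  intro n
  induction n with
  | zero => intro x; simp [Gg]
  | succ n ih =>
    intro x
    show Gg p (n+1) x ^ p + (p:A) * Gg p (n+1) (fun i => x (i+1)) = _
    rw [ih x, ih (fun i => x (i+1))]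
    rfl

lemma pow_sub_pow_dvd {a b : A} {k : ℕ} (h1 : (p:A) ∣ a - b) (hk : (p:A)^k ∣ a - b) :
    (p:A)^(k+1) ∣ a^p - b^p := by
  have hgeom := geom_sum₂_mul a b p
  have hS : (p:A) ∣ ∑ i ∈ Finset.range p, a ^ i * b ^ (p - 1 - i) := by
    have h2 : (p:A) ∣ (∑ i ∈ Finset.range p, a ^ i * b ^ (p - 1 - i))
        - ∑ i ∈ Finset.range p, a ^ i * a ^ (p - 1 - i) := by
      rw [← Finset.sum_sub_distrib]
      refine Finset.dvd_sum (fun i _ => ?_)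
      have : a ^ i * b ^ (p-1-i) - a ^ i * a ^ (p-1-i) = a ^ i * (b ^ (p-1-i) - a ^ (p-1-i)) := by
        ring
      rw [this]
      exact Dvd.dvd.mul_left ((dvd_sub_comm.mp h1).trans (sub_dvd_pow_sub_pow b a _)) _
    have h3 : (p:A) ∣ ∑ i ∈ Finset.range p, a ^ i * a ^ (p - 1 - i) := by
      have : ∑ i ∈ Finset.range p, a ^ i * a ^ (p - 1 - i) = (p:A) * a ^ (p-1) := by
        rw [Finset.sum_congr rfl (fun i hi => ?_), Finset.sum_const, Finset.card_range,
          nsmul_eq_mul]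
        rw [← pow_add]
        congr 1
        have := Finset.mem_range.mp hi
        omega
      rw [this]
      exact Dvd.intro _ rfl
    have := dvd_add h2 h3
    simpa using this
  rw [← hgeom, pow_succ']
  exact mul_dvd_mul hS hk

lemma Gg_dvd : ∀ (n : ℕ) {x y : ℕ → A}, (∀ i, (p:A) ∣ x i - y i) →
    (p:A)^(n+1) ∣ Gg p n x - Gg p n y := by
  intro n
  induction n with
  | zero => intro x y h; simpa [Gg] using h 0
  | succ n ih =>
    intro x y h
    have h1 : (p:A) ∣ Gg p n x - Gg p n y :=
      (dvd_pow_self (p:A) (Nat.succ_ne_zero n)).trans (ih h)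
    have h2 : (p:A)^(n+2) ∣ Gg p n x ^ p - Gg p n y ^ p := pow_sub_pow_dvd p h1 (ih h)
    have h3 : (p:A)^(n+2) ∣ (p:A) * Gg p n (fun i => x (i+1)) -
        (p:A) * Gg p n (fun i => y (i+1)) := by
      rw [← mul_sub, pow_succ']
      exact mul_dvd_mul_left _ (ih (fun i => h (i+1)))
    have : Gg p (n+1) x - Gg p (n+1) y = (Gg p n x ^ p - Gg p n y ^ p) +
        ((p:A) * Gg p n (fun i => x (i+1)) - (p:A) * Gg p n (fun i => y (i+1))) := by
      simp only [Gg]; ring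
    rw [this]
    exact dvd_add h2 h3

lemma Gg_mem (S : Subalgebra ℤ A) : ∀ (n : ℕ) {x : ℕ → A}, (∀ i, x i ∈ S) →
    Gg p n x ∈ S := by
  intro n
  induction n with
  | zero => intro x h; exact h 0
  | succ n ih =>
    intro x h
    exact S.add_mem (S.pow_mem (ih h) p)
      (S.mul_mem (S.natCast_mem p) (ih (fun i => h (i+1))))

/-! ### The universal ring -/

local notation "R₁" => MvPolynomial ℕ ℤ

/-- The universal Frobenius lift on `ℤ[x₀,x₁,…]`, `xᵢ ↦ xᵢ^p + p·xᵢ₊₁`. -/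
def frobA : R₁ →ₐ[ℤ] R₁ := aeval (fun i => X i ^ p + (p : R₁) * X (i+1))

lemma frobA_X (i : ℕ) : frobA p (X i) = X i ^ p + (p : R₁) * X (i+1) := by
  simp [frobA]

lemma frob_dvd (hp : p.Prime) (z : R₁) : (p:R₁) ∣ frobA p z - z^p := by
  induction z using MvPolynomial.induction_on with
  | C a =>
    have hfermat : (p:ℤ) ∣ a - a^p := by
      haveI : Fact p.Prime := ⟨hp⟩
      have : ((a - a^p : ℤ) : ZMod p) = 0 := by push_cast [ZMod.pow_card]; ring
      exact_mod_cast (ZMod.intCast_zmod_eq_zero_iff_dvd _ p).mp this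
    have : frobA p (C a) - (C a)^p = C (a - a^p) := by
      simp [frobA, map_sub, map_pow, algebraMap_eq]
    rw [this]
    obtain ⟨c, hc⟩ := hfermat
    exact ⟨C c, by rw [hc, map_mul, map_natCast]⟩
  | add q r hq hr =>
    obtain ⟨s, hs⟩ := exists_add_pow_prime_eq hp q r
    have : frobA p (q + r) - (q+r)^p =
        (frobA p q - q^p) + (frobA p r - r^p) - (p:R₁) * (q * r * s) := by
      rw [map_add, hs]; ring
    rw [this]
    exact dvd_sub (dvd_add hq hr) (Dvd.intro _ rfl)
  | mul_X q i hq =>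
    have : frobA p (q * X i) - (q * X i)^p =
        X i ^ p * (frobA p q - q ^ p) + (p:R₁) * (frobA p q * X (i+1)) := by
      rw [map_mul, frobA_X]; ring
    rw [this]
    exact dvd_add (Dvd.dvd.mul_left hq _) (Dvd.intro _ rfl)

open Classical in
/-- Division by `p^e` (junk value when not divisible). -/
def divE (e : ℕ) (z : R₁) : R₁ := if h : ((p:R₁)^e) ∣ z then h.choose else 0

lemma divE_spec {e : ℕ} {z : R₁} (h : (p:R₁)^e ∣ z) : (p:R₁)^e * divE p e z = z := by
  rw [divE, dif_pos h]
  exact h.choose_spec.symm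

/-- The universal `p`-derivation on `ℤ[x₀,x₁,…]`. -/
def delA (z : R₁) : R₁ := divE p 1 (frobA p z - z^p)

lemma pR_ne_zero (hp : p.Prime) : (p:R₁) ≠ 0 := by
  exact_mod_cast hp.ne_zero

lemma delA_spec (hp : p.Prime) (z : R₁) : (p:R₁) * delA p z = frobA p z - z^p := by
  have := divE_spec p (e := 1) (z := frobA p z - z^p) (by simpa using frob_dvd p hp z)
  simpa [delA] using this

lemma delA_X (hp : p.Prime) (i : ℕ) : delA p (X i) = X (i+1) := by
  have h := delA_spec p hp (X i)
  rw [frobA_X] at h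
  have : (p:R₁) * delA p (X i) = (p:R₁) * X (i+1) := by rw [h]; ring
  exact mul_left_cancel₀ (pR_ne_zero p hp) this

lemma delA_iter_X (hp : p.Prime) (k : ℕ) : (delA p)^[k] (X 0) = X k := by
  induction k with
  | zero => rfl
  | succ k ih => rw [Function.iterate_succ_apply', ih, delA_X p hp]

/-- The universal model of the sequence `ι(δ^j(b))`. -/
def uhat (m : ℕ) : ℕ → R₁
  | j =>
    if _h1 : j ≤ m then 0
    else if _h2 : j = m + 1 then X 0
    else
      divE p (m+1) ((delA p)^[j - m - 1] ((p:R₁)^(m+1) * X 0)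
        - Gg p (m+1) (fun i => if _h3 : i ≤ m then uhat m (j - m - 1 + i) else 0))
  termination_by j => j
  decreasing_by omega

/-- The lower-order remainder term. -/
def Rt (m k : ℕ) : R₁ := Gg p (m+1) (fun i => if i ≤ m then uhat p m (k + i) else 0)

lemma uhat_le {m j : ℕ} (hj : j ≤ m) : uhat p m j = 0 := by
  rw [uhat, dif_pos hj]

lemma uhat_m1 (m : ℕ) : uhat p m (m+1) = X 0 := by
  rw [uhat]
  simp

lemma uhat_succ (m k : ℕ) (hk : 1 ≤ k) :
    uhat p m (m+1+k) = divE p (m+1) ((delA p)^[k] ((p:R₁)^(m+1) * X 0) - Rt p m k) := by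
  rw [uhat, dif_neg (by omega), dif_neg (by omega)]
  have harith : m + 1 + k - m - 1 = k := by omega
  rw [harith]
  have : Gg p (m+1) (fun i => if _h3 : i ≤ m then uhat p m (k + i) else 0) = Rt p m k := by
    simp only [Rt]
    apply Gg_congr
    intro i _
    by_cases h : i ≤ m <;> simp [h]
  rw [this]

set_option maxHeartbeats 1000000 in
theorem uhat_main (hp : p.Prime) (m : ℕ) :
    ∀ k, Gg p (m+1) (fun i => uhat p m (k+i)) = (delA p)^[k] ((p:R₁)^(m+1) * X 0) := by
  intro k
  induction k with
  | zero =>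
    rw [Function.iterate_zero_apply,
      Gg_zeros p hp.ne_zero (x := fun i => uhat p m (0+i))
        (fun i hi => uhat_le p (by omega)),
      show (0:ℕ)+(m+1) = m+1 from by omega, uhat_m1]
  | succ k ih =>
    set w : ℕ → R₁ := fun i => uhat p m (k+i) with hw
    set y : ℕ → R₁ := fun i => if i ≤ m+1 then w i else 0 with hy
    have e1 : (p:R₁) * ((delA p)^[k+1] ((p:R₁)^(m+1) * X 0) - Rt p m (k+1)) =
        Gg p (m+1) (fun i => frobA p (w i)) - Gg p (m+1) w ^ p - (p:R₁) * Rt p m (k+1) := by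
      rw [Function.iterate_succ_apply', ← ih, mul_sub, delA_spec p hp, Gg_hom p (frobA p)]
    have e2 : Gg p (m+1+1) y = Gg p (m+1) w ^ p + (p:R₁) * Rt p m (k+1) := by
      have hunf : Gg p (m+1+1) y = Gg p (m+1) y ^ p + (p:R₁) * Gg p (m+1) (fun i => y (i+1)) :=
        Gg_succ p (m+1) y
      have hy1 : Gg p (m+1) y = Gg p (m+1) w := Gg_congr p (fun i hi => by simp [hy, hi])
      have hy2 : Gg p (m+1) (fun i => y (i+1)) = Rt p m (k+1) := by
        simp only [Rt]
        apply Gg_congr p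
        intro i hi
        by_cases h : i ≤ m
        · simp [hy, hw, show i+1 ≤ m+1 from by omega, h, show k+(i+1) = k+1+i from by omega]
        · simp [hy, h, show ¬(i+1 ≤ m+1) from by omega]
      rw [hunf, hy1, hy2]
    have d1 : (p:R₁)^(m+1+1) ∣ Gg p (m+1) (fun i => frobA p (w i)) - Gg p (m+1+1) y := by
      have htr : Gg p (m+1) (fun i => frobA p (w i)) =
          Gg p (m+1) (fun i => if i ≤ m+1 then frobA p (w i) else 0) :=
        Gg_congr p (fun i hi => by simp [hi])
      rw [htr, Gg_shift p (m+1) y]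
      refine Gg_dvd p (m+1) (fun i => ?_)
      by_cases h : i ≤ m+1
      · have hfd := frob_dvd p hp (w i)
        have hstep : (if i ≤ m+1 then frobA p (w i) else 0) - (y i ^ p + (p:R₁) * y (i+1)) =
            (frobA p (w i) - w i ^ p) - (p:R₁) * y (i+1) := by
          simp only [hy, h, if_true]
          ring
        rw [hstep]
        exact dvd_sub hfd (Dvd.intro _ rfl)
      · have hstep : (if i ≤ m+1 then frobA p (w i) else 0) - (y i ^ p + (p:R₁) * y (i+1)) =
            - ((p:R₁) * y (i+1)) := by
          simp only [hy, h, if_false]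
          rw [zero_pow hp.ne_zero]
          ring
        rw [hstep]
        exact (Dvd.intro _ rfl).neg_right
    have hdvd : (p:R₁)^(m+1) ∣ (delA p)^[k+1] ((p:R₁)^(m+1) * X 0) - Rt p m (k+1) := by
      obtain ⟨t, ht⟩ := d1
      refine ⟨t, mul_left_cancel₀ (pR_ne_zero p hp) ?_⟩
      rw [e1]
      have h2 : Gg p (m+1) (fun i => frobA p (w i)) = (p:R₁)^(m+1+1) * t + Gg p (m+1+1) y := by
        linear_combination ht
      rw [h2, e2, pow_succ']
      ring
    have hs := divE_spec p hdvd
    rw [← uhat_succ p m (k+1) (by omega)] at hs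
    rw [Gg_split p (m+1) (fun i => uhat p m (k+1+i))]
    have hR : Gg p (m+1) (fun i => if i = m+1 then 0 else uhat p m (k+1+i)) = Rt p m (k+1) := by
      simp only [Rt]
      apply Gg_congr p
      intro i hi
      by_cases h : i ≤ m
      · simp [h, show i ≠ m+1 from by omega]
      · simp [h, show i = m+1 from by omega]
    rw [hR, show k+1+(m+1) = m+1+(k+1) from by omega, hs]
    ring

lemma uhat_eq (hp : p.Prime) (m k : ℕ) :
    (p:R₁)^(m+1) * uhat p m (m+1+k) + Rt p m k =
      (delA p)^[k] ((p:R₁)^(m+1) * X 0) := by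
  rw [← uhat_main p hp m k, Gg_split p (m+1) (fun i => uhat p m (k+i))]
  have hR : Gg p (m+1) (fun i => if i = m+1 then 0 else uhat p m (k+i)) = Rt p m k := by
    simp only [Rt]
    apply Gg_congr p
    intro i hi
    by_cases h : i ≤ m
    · simp [h, show i ≠ m+1 from by omega]
    · simp [h, show i = m+1 from by omega]
  rw [hR, show k+(m+1) = m+1+k from by omega]

/-! ### Variable bookkeeping -/

lemma div_supported (hp : p.Prime) {s : Set ℕ} {e : ℕ} {z : R₁}
    (h : (p:R₁)^e * z ∈ supported ℤ s) : z ∈ supported ℤ s := by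
  rw [mem_supported] at h ⊢
  have hC : ((p:R₁))^e * z = C ((p:ℤ)^e) * z := by
    rw [map_pow, map_natCast]
  rw [hC, vars_C_mul _ (pow_ne_zero _ (by exact_mod_cast hp.ne_zero))] at h
  exact h

lemma frob_supported (hp : p.Prime) {n : ℕ} {z : R₁}
    (h : z ∈ supported ℤ {i | i < n}) :
    frobA p z ∈ supported ℤ {i | i < n + 1} := by
  have hmap : (supported ℤ {i : ℕ | i < n}).map (frobA p) ≤ supported ℤ {i | i < n+1} := by
    rw [supported_eq_adjoin_X, AlgHom.map_adjoin]
    apply Algebra.adjoin_le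
    rintro _ ⟨_, ⟨i, hi, rfl⟩, rfl⟩
    simp only [Set.mem_setOf_eq] at hi
    rw [frobA_X]
    refine Subalgebra.add_mem _ (Subalgebra.pow_mem _ ?_ p)
      (Subalgebra.mul_mem _ (Subalgebra.natCast_mem _ p) ?_)
    · exact X_mem_supported.mpr (by simp only [Set.mem_setOf_eq]; omega)
    · exact X_mem_supported.mpr (by simp only [Set.mem_setOf_eq]; omega)
  exact hmap ⟨z, h, rfl⟩

lemma sup1 (hp : p.Prime) (m : ℕ) : ∀ n : ℕ,
    (delA p)^[n] ((p:R₁)^(m+1) * X 0) - (p:R₁)^(m+1) * X n ∈ supported ℤ {i | i < n} := by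
  intro n
  induction n with
  | zero => simpa using Subalgebra.zero_mem _
  | succ n ih =>
    set s : R₁ := (delA p)^[n] ((p:R₁)^(m+1) * X 0) - (p:R₁)^(m+1) * X n with hs
    have h0 : (delA p)^[n] ((p:R₁)^(m+1) * X 0) = (p:R₁)^(m+1) * X n + s := by
      rw [hs]; ring
    have hpd : (p:R₁) * ((delA p)^[n+1] ((p:R₁)^(m+1) * X 0) - (p:R₁)^(m+1) * X (n+1)) =
        (p:R₁)^(m+1) * X n ^ p + frobA p s - ((p:R₁)^(m+1) * X n + s)^p := by
      rw [Function.iterate_succ_apply', h0, mul_sub, delA_spec p hp, map_add, map_mul,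
        map_pow, map_natCast, frobA_X]
      ring
    have hmem : (p:R₁)^1 * ((delA p)^[n+1] ((p:R₁)^(m+1) * X 0) -
        (p:R₁)^(m+1) * X (n+1)) ∈ supported ℤ {i | i < n+1} := by
      rw [pow_one, hpd]
      refine Subalgebra.sub_mem _ (Subalgebra.add_mem _ ?_ ?_) ?_
      · exact Subalgebra.mul_mem _ (Subalgebra.pow_mem _ (Subalgebra.natCast_mem _ p) _)
          (Subalgebra.pow_mem _ (X_mem_supported.mpr (by simp only [Set.mem_setOf_eq]; omega)) _)
      · exact frob_supported p hp ih
      · refine Subalgebra.pow_mem _ (Subalgebra.add_mem _ ?_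
          (supported_mono (fun i (hi : i < n) => (by omega : i < n+1)) ih)) _
        exact Subalgebra.mul_mem _ (Subalgebra.pow_mem _ (Subalgebra.natCast_mem _ p) _)
          (X_mem_supported.mpr (Nat.lt_succ_self n))
    exact div_supported p hp hmem

lemma sup2 (hp : p.Prime) (m : ℕ) : ∀ k : ℕ,
    uhat p m (m+1+k) - X k ∈ supported ℤ {i | i < k} := by
  intro k
  induction k using Nat.strong_induction_on with
  | _ k ih =>
    have hRt : Rt p m k ∈ supported ℤ {i | i < k} := by
      refine Gg_mem p _ (m+1) (fun i => ?_)
      by_cases h : i ≤ m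
      · simp only [h, if_true]
        by_cases h2 : k + i ≤ m
        · rw [uhat_le p h2]; exact Subalgebra.zero_mem _
        · have hk1 : 1 ≤ k := by omega
          set k' : ℕ := k + i - m - 1 with hk'
          have hkk' : k' < k := by omega
          have hidx : k + i = m + 1 + k' := by omega
          rw [hidx]
          have : uhat p m (m+1+k') = (uhat p m (m+1+k') - X k') + X k' := by ring
          rw [this]
          refine Subalgebra.add_mem _
            (supported_mono (fun j (hj : j < k') => (by omega : j < k)) (ih k' hkk')) ?_
          exact X_mem_supported.mpr (by simp only [Set.mem_setOf_eq]; omega)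
      · simp only [h, if_false]; exact Subalgebra.zero_mem _
    have hmem : (p:R₁)^(m+1) * (uhat p m (m+1+k) - X k) ∈ supported ℤ {i | i < k} := by
      have heq : (p:R₁)^(m+1) * (uhat p m (m+1+k) - X k) =
          ((delA p)^[k] ((p:R₁)^(m+1) * X 0) - (p:R₁)^(m+1) * X k) - Rt p m k := by
        have := uhat_eq p hp m k
        linear_combination this
      rw [heq]
      exact Subalgebra.sub_mem _ (sup1 p hp m k) hRt
    exact div_supported p hp hmem

/-! ### Vanishing at zero -/

lemma eps_frob (hp : p.Prime) (z : R₁) :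
    eval (fun _ => (0:ℤ)) (frobA p z) = eval (fun _ => (0:ℤ)) z := by
  have : (eval (fun _ => (0:ℤ))).comp (frobA p).toRingHom = eval (fun _ => (0:ℤ)) := by
    apply ringHom_ext
    · intro a; simp [frobA]
    · intro i; simp [frobA, zero_pow hp.ne_zero]
  exact RingHom.congr_fun this z

lemma eps_delA (hp : p.Prime) {z : R₁} (h : eval (fun _ => (0:ℤ)) z = 0) :
    eval (fun _ => (0:ℤ)) (delA p z) = 0 := by
  have h1 := congrArg (eval (fun _ => (0:ℤ))) (delA_spec p hp z)
  simp only [map_mul, map_sub, map_pow, map_natCast, eps_frob p hp, h,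
    zero_pow hp.ne_zero, sub_zero] at h1
  have hpz : (p:ℤ) ≠ 0 := by exact_mod_cast hp.ne_zero
  exact (mul_eq_zero.mp h1).resolve_left hpz

lemma eps_delA_iter (hp : p.Prime) (m : ℕ) (k : ℕ) :
    eval (fun _ => (0:ℤ)) ((delA p)^[k] ((p:R₁)^(m+1) * X 0)) = 0 := by
  induction k with
  | zero => simp
  | succ k ih => rw [Function.iterate_succ_apply']; exact eps_delA p hp ih

lemma eps_uhat (hp : p.Prime) (m : ℕ) : ∀ j, eval (fun _ => (0:ℤ)) (uhat p m j) = 0 := by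
  intro j
  induction j using Nat.strong_induction_on with
  | _ j ih =>
    rcases le_or_gt j m with hj | hj
    · rw [uhat_le p hj]; simp
    · rcases eq_or_lt_of_le (Nat.succ_le_of_lt hj) with hj2 | hj2
      · rw [← hj2, uhat_m1]; simp
      · set k : ℕ := j - m - 1 with hk
        have hjk : j = m + 1 + k := by omega
        have h1 := congrArg (eval (fun _ => (0:ℤ))) (uhat_eq p hp m k)
        have hRt : eval (fun _ => (0:ℤ)) (Rt p m k) = 0 := by
          simp only [Rt]
          rw [Gg_hom p (eval (fun _ => (0:ℤ)))]
          rw [Gg_congr p (y := fun _ => (0:ℤ)) (fun i hi => ?_), Gg_zero p hp.ne_zero]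
          by_cases h : i ≤ m
          · simp only [h, if_true]
            exact ih (k + i) (by omega)
          · simp [h]
        rw [map_add, map_mul, hRt, eps_delA_iter p hp m k, map_pow, map_natCast,
          add_zero] at h1
        have hpz : ((p:ℤ))^(m+1) ≠ 0 := pow_ne_zero _ (by exact_mod_cast hp.ne_zero)
        rw [hjk]
        exact (mul_eq_zero.mp h1).resolve_left hpz

/-! ### The universal representation -/

theorem rep (hp : p.Prime) (m n : ℕ) :
    ∃ H : MvPolynomial (Fin n) ℤ,
      MvPolynomial.eval (fun _ => (0:ℤ)) H = 0 ∧
      X n - uhat p m (m+1+n) =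
        aeval (fun i : Fin n => uhat p m (m+1+(i:ℕ))) H := by
  set fam : Fin n → R₁ := fun i => uhat p m (m+1+(i:ℕ)) with hfam
  have hXrange : ∀ i, i < n → X i ∈ (aeval (R := ℤ) fam).range := by
    intro i
    induction i using Nat.strong_induction_on with
    | _ i ihX =>
      intro hi
      have h1 : uhat p m (m+1+i) ∈ (aeval (R := ℤ) fam).range :=
        ⟨X ⟨i, hi⟩, by simp [hfam]⟩
      have h2 : uhat p m (m+1+i) - X i ∈ (aeval (R := ℤ) fam).range := by
        have hsup : supported ℤ {j | j < i} ≤ (aeval (R := ℤ) fam).range := by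
          rw [supported_eq_adjoin_X]
          apply Algebra.adjoin_le
          rintro _ ⟨j, hj, rfl⟩
          simp only [Set.mem_setOf_eq] at hj
          exact ihX j hj (by omega)
        exact hsup (sup2 p hp m i)
      have : X i = uhat p m (m+1+i) - (uhat p m (m+1+i) - X i) := by ring
      rw [this]
      exact Subalgebra.sub_mem _ h1 h2
  have hz : X n - uhat p m (m+1+n) ∈ (aeval (R := ℤ) fam).range := by
    have : X n - uhat p m (m+1+n) = -(uhat p m (m+1+n) - X n) := by ring
    rw [this]
    refine Subalgebra.neg_mem _ ?_
    have hsup : supported ℤ {j | j < n} ≤ (aeval (R := ℤ) fam).range := by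
      rw [supported_eq_adjoin_X]
      apply Algebra.adjoin_le
      rintro _ ⟨j, hj, rfl⟩
      simp only [Set.mem_setOf_eq] at hj
      exact hXrange j hj
    exact hsup (sup2 p hp m n)
  obtain ⟨H, hH0⟩ := hz
  have hH : (aeval (R := ℤ) fam) H = X n - uhat p m (m+1+n) := hH0
  refine ⟨H, ?_, hH.symm⟩
  have heps : eval (fun _ => (0:ℤ)) (aeval (R := ℤ) fam H) =
      eval (fun _ => (0:ℤ)) H := by
    rw [show eval (fun _ => (0:ℤ)) (aeval (R := ℤ) fam H) =
        ((eval (fun _ => (0:ℤ))).comp ((aeval (R := ℤ) fam) : MvPolynomial (Fin n) ℤ →+* R₁)) H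
        from rfl]
    congr 1
    apply ringHom_ext
    · intro a; simp
    · intro i
      simp only [RingHom.comp_apply, RingHom.coe_coe, aeval_X, eval_X]
      exact eps_uhat p hp m _
  have h0 : eval (fun _ => (0:ℤ)) (X n - uhat p m (m+1+n)) = 0 := by
    rw [map_sub, eps_uhat p hp m]
    simp
  rw [← heps, hH]
  exact h0

/-! ### Frobenius lifts from `p`-derivations -/

section Frob

variable {A : Type*} [CommRing A] {Cp : MvPolynomial (Fin 2) ℤ}

lemma aeval_Cp (hCp : (p : MvPolynomial (Fin 2) ℤ) * Cp =
    X 0 ^ p + X 1 ^ p - (X 0 + X 1) ^ p) (x y : A) :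
    (p:A) * (aeval ![x, y] Cp) = x ^ p + y ^ p - (x + y) ^ p := by
  have h := congrArg (aeval (R := ℤ) ![x, y]) hCp
  simpa using h

/-- The Frobenius lift associated to a `p`-derivation, as a ring homomorphism. -/
def mkFrob (hCp : (p : MvPolynomial (Fin 2) ℤ) * Cp =
      X 0 ^ p + X 1 ^ p - (X 0 + X 1) ^ p)
    (δ : A → A) (hδ : IsPDeriv p Cp δ) (ψ : A → A)
    (hψ : ∀ x : A, ψ x = x ^ p + (p:A) * δ x) : A →+* A :=
  RingHom.mk'
    { toFun := ψ
      map_one' := by rw [hψ 1, hδ.1]; ring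
      map_mul' := fun x y => by
        show ψ (x * y) = ψ x * ψ y
        rw [hψ, hψ, hψ, hδ.2.2]; ring }
    (fun x y => by
      show ψ (x + y) = ψ x + ψ y
      rw [hψ, hψ, hψ, hδ.2.1]
      linear_combination aeval_Cp p hCp x y)

lemma mkFrob_coe (hCp : (p : MvPolynomial (Fin 2) ℤ) * Cp =
      X 0 ^ p + X 1 ^ p - (X 0 + X 1) ^ p)
    (δ : A → A) (hδ : IsPDeriv p Cp δ) (ψ : A → A)
    (hψ : ∀ x : A, ψ x = x ^ p + (p:A) * δ x) :
    ⇑(mkFrob p hCp δ hδ ψ hψ) = ψ := rfl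

lemma iter_frob_G (Ψ : A →+* A) (δ : A → A)
    (h : ∀ x : A, Ψ x = x ^ p + (p:A) * δ x) (n : ℕ) (x : A) :
    (⇑Ψ)^[n] x = Gg p n (fun i => δ^[i] x) := by
  induction n generalizing x with
  | zero => rfl
  | succ n ih =>
    rw [Function.iterate_succ_apply, h x]
    have hcoe : (⇑Ψ)^[n] = ⇑(Ψ^n) := (RingHom.coe_pow Ψ n).symm
    rw [hcoe, map_add, map_pow, map_mul, map_natCast, ← hcoe, ih, ih, Gg_succ]
    have h2 : Gg p n (fun i => δ^[i] (δ x)) = Gg p n (fun i => δ^[i+1] x) :=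
      Gg_congr p (fun i _ => (Function.iterate_succ_apply δ i x).symm)
    rw [h2]

end Frob

end
end PDA

open PDA

set_option maxHeartbeats 1000000 in
/-- `Δ^n(ι(δ^{m+1}(b))) - ι(δ^{m+n+1}(b))` is a centered polynomial in
`ι(δ^{m+1}(b)), …, ι(δ^{m+n}(b))`. -/
theorem iterate_Delta_sub_iterate_delta_centered
    (p : ℕ) (hp : p.Prime) {B C' : Type*} [CommRing B] [CommRing C']
    (hpB : (p : B) ∈ nonZeroDivisors B) (hpC : (p : C') ∈ nonZeroDivisors C')
    (Cp : MvPolynomial (Fin 2) ℤ)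
    (hCp : (p : MvPolynomial (Fin 2) ℤ) * Cp =
      X 0 ^ p + X 1 ^ p - (X 0 + X 1) ^ p)
    (δ : B → B) (hδ : IsPDeriv p Cp δ)
    (ψ : B → B) (hψ : ∀ x : B, ψ x = x ^ p + (p : B) * δ x)
    (Δ : C' → C') (hΔ : IsPDeriv p Cp Δ)
    (f : C' → C') (hf : ∀ y : C', f y = y ^ p + (p : C') * Δ y)
    (ι : B →+* C') (m : ℕ)
    (hcomm : ∀ a : B, f (ι (ψ^[m + 1] a)) = ι (ψ^[m + 2] a))
    (b : B) (hb : ∀ j ≤ m, ι (δ^[j] b) = 0) :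
    ∀ n, 1 ≤ n → ∃ H : MvPolynomial (Fin n) ℤ, Centered H ∧
      Δ^[n] (ι (δ^[m + 1] b)) - ι (δ^[m + n + 1] b) =
        MvPolynomial.aeval (fun i : Fin n => ι (δ^[m + 1 + (i : ℕ)] b)) H := by
  intro n _hn
  have Ψ : B →+* B := mkFrob p hCp δ hδ ψ hψ
  have F : C' →+* C' := mkFrob p hCp Δ hΔ f hf
  -- the `(★)` family in `C'`
  have hvG : ∀ k, ι (ψ^[m+1] (δ^[k] b)) = Gg p (m+1) (fun i => ι (δ^[k+i] b)) := by
    intro k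
    have h1 : ψ^[m+1] (δ^[k] b) = Gg p (m+1) (fun i => δ^[i] (δ^[k] b)) :=
      iter_frob_G p (mkFrob p hCp δ hδ ψ hψ) δ (fun x => hψ x) (m+1) (δ^[k] b)
    rw [h1, Gg_hom p ι]
    apply Gg_congr
    intro i _
    rw [← Function.iterate_add_apply, Nat.add_comm i k]
  have hvStep : ∀ k, Δ (ι (ψ^[m+1] (δ^[k] b))) = ι (ψ^[m+1] (δ^[k+1] b)) := by
    intro k
    have h1 := hcomm (δ^[k] b)
    have h2 : ψ^[m+2] (δ^[k] b) = ψ^[m+1] (ψ (δ^[k] b)) :=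
      Function.iterate_succ_apply ψ (m+1) (δ^[k] b)
    rw [h2, hψ (δ^[k] b)] at h1
    have hcoe : ψ^[m+1] = ⇑((mkFrob p hCp δ hδ ψ hψ)^(m+1)) :=
      (RingHom.coe_pow (mkFrob p hCp δ hδ ψ hψ) (m+1)).symm
    rw [hcoe, map_add, map_pow, map_mul, map_natCast, ← hcoe] at h1
    rw [map_add, map_mul, map_pow, map_natCast] at h1
    rw [hf] at h1
    rw [← Function.iterate_succ_apply' δ k b] at h1
    have h3 : (Δ (ι (ψ^[m+1] (δ^[k] b))) - ι (ψ^[m+1] (δ^[k+1] b))) * (p:C') = 0 := by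
      linear_combination h1
    have h4 := hpC.2 _ h3
    linear_combination h4
  have hvIter : ∀ k, Δ^[k] (ι (ψ^[m+1] b)) = ι (ψ^[m+1] (δ^[k] b)) := by
    intro k
    induction k with
    | zero => rfl
    | succ k ih => rw [Function.iterate_succ_apply', ih, hvStep k]
  have hv0 : ι (ψ^[m+1] b) = (p:C')^(m+1) * ι (δ^[m+1] b) := by
    have h1 : ι (ψ^[m+1] b) = Gg p (m+1) (fun i => ι (δ^[i] b)) := by
      have := hvG 0
      simpa using this
    rw [h1, Gg_zeros p hp.ne_zero (fun i hi => hb i (by omega))]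
  have hstar : ∀ k, Δ^[k] ((p:C')^(m+1) * ι (δ^[m+1] b)) =
      Gg p (m+1) (fun i => ι (δ^[k+i] b)) := by
    intro k
    rw [← hv0, hvIter k, hvG k]
  -- the transfer homomorphism
  set θ : MvPolynomial ℕ ℤ →ₐ[ℤ] C' :=
    aeval (fun i : ℕ => Δ^[i] (ι (δ^[m+1] b))) with hθdef
  have hθX : ∀ i, θ (X i) = Δ^[i] (ι (δ^[m+1] b)) := by
    intro i; rw [hθdef, aeval_X]
  have hθfrob : ∀ z, θ (frobA p z) = f (θ z) := by
    have hcomp : (θ.toRingHom.comp (frobA p).toRingHom) =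
        (mkFrob p hCp Δ hΔ f hf).comp θ.toRingHom := by
      apply ringHom_ext
      · intro a
        simp [frobA]
      · intro i
        show θ (frobA p (X i)) = mkFrob p hCp Δ hΔ f hf (θ (X i))
        rw [frobA_X, map_add, map_mul, map_pow, map_natCast, hθX, hθX,
          mkFrob_coe, hf, ← Function.iterate_succ_apply' Δ i]
    intro z
    exact RingHom.congr_fun hcomp z
  have hθdel : ∀ z, θ (delA p z) = Δ (θ z) := by
    intro z
    have h1 := congrArg θ (delA_spec p hp z)
    rw [map_mul, map_natCast, map_sub, map_pow, hθfrob, hf] at h1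
    have h2 : (θ (delA p z) - Δ (θ z)) * (p:C') = 0 := by linear_combination h1
    have h3 := hpC.2 _ h2
    linear_combination h3
  have hθdelIter : ∀ k z, θ ((delA p)^[k] z) = Δ^[k] (θ z) := by
    intro k
    induction k with
    | zero => intro z; rfl
    | succ k ih =>
      intro z
      rw [Function.iterate_succ_apply', Function.iterate_succ_apply', hθdel, ih]
  have hθN : θ ((p:MvPolynomial ℕ ℤ)^(m+1) * X 0) = (p:C')^(m+1) * ι (δ^[m+1] b) := by
    rw [map_mul, map_pow, map_natCast, hθX]
    rfl
  have hθuhat : ∀ j, θ (uhat p m j) = ι (δ^[j] b) := by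
    intro j
    induction j using Nat.strong_induction_on with
    | _ j ih =>
      rcases le_or_gt j m with hj | hj
      · rw [uhat_le p hj, map_zero, hb j hj]
      · have hj' : m + 1 ≤ j := hj
        rcases eq_or_lt_of_le hj' with hj2 | hj2
        · rw [← hj2, uhat_m1, hθX]
          rfl
        · set k : ℕ := j - m - 1 with hk
          have hk1 : 1 ≤ k := by omega
          have hjk : j = m + 1 + k := by omega
          have h1 := congrArg θ (uhat_eq p hp m k)
          rw [map_add, map_mul, map_pow, map_natCast, hθdelIter, hθN, hstar k] at h1
          have hθRt : θ (Rt p m k) =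
              Gg p (m+1) (fun i => if i ≤ m then ι (δ^[k+i] b) else 0) := by
            simp only [Rt]
            rw [Gg_hom p θ]
            apply Gg_congr
            intro i hi
            by_cases h : i ≤ m
            · simp only [h, if_true]
              exact ih (k+i) (by omega)
            · simp [h]
          rw [hθRt] at h1
          have hsplit : Gg p (m+1) (fun i => ι (δ^[k+i] b)) =
              (p:C')^(m+1) * ι (δ^[k+(m+1)] b) +
              Gg p (m+1) (fun i => if i ≤ m then ι (δ^[k+i] b) else 0) := by
            rw [Gg_split p (m+1) (fun i => ι (δ^[k+i] b))]
            congr 1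
            apply Gg_congr
            intro i hi
            by_cases h : i ≤ m
            · simp [h, show i ≠ m+1 from by omega]
            · simp [h, show i = m+1 from by omega]
          rw [hsplit] at h1
          have h2 : (θ (uhat p m (m+1+k)) - ι (δ^[k+(m+1)] b)) * (p:C')^(m+1) = 0 := by
            linear_combination h1
          have h3 := (pow_mem hpC (m+1)).2 _ h2
          rw [show k+(m+1) = m+1+k from by omega] at h3
          rw [hjk]
          linear_combination h3
  -- put everything together
  obtain ⟨H, hHc, hHeq⟩ := rep p hp m n
  refine ⟨H, hHc, ?_⟩
  have h1 := congrArg θ hHeq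
  rw [map_sub, hθX, hθuhat] at h1
  have hcomp : θ ((aeval (fun i : Fin n => uhat p m (m+1+(i:ℕ)))) H) =
      (aeval (fun i : Fin n => ι (δ^[m+1+(i:ℕ)] b))) H := by
    have hc2 : (θ.comp (aeval (fun i : Fin n => uhat p m (m+1+(i:ℕ))))) H =
        (aeval (fun i : Fin n => ι (δ^[m+1+(i:ℕ)] b))) H := by
      rw [comp_aeval, show (fun i : Fin n => θ (uhat p m (m+1+(i:ℕ)))) =
        (fun i : Fin n => ι (δ^[m+1+(i:ℕ)] b)) from funext fun i => hθuhat _]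
    exact hc2
  rw [hcomp] at h1
  rw [show m+n+1 = m+1+n from by omega]
  exact h1
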